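/- The operation f·_d τ := (b/(b+c))·(fτ + (1/b)·df∧i_Rτ) for homogeneous f ∈ S(c), τ ∈ Ω^r(b) (with the usual product when b = c = 0) is associative over S: for all homogeneous f ∈ S(c), g ∈ S(e) and τ ∈ Ω^r(b), (gf)·_d τ = g·_d (f·_d τ). Consequently ·_d defines an S-module structure on ⊕_{b≥1} Ω^r(b) extending scalar multiplication by ℂ. -/

import Mathlib

/-!
Common setup: a concrete model of the exterior algebra `Ω` of differential forms over
`S = ℂ[x₁,…,xₙ]`.  An element of `Ω` is encoded as a function assigning to each subset
`I ⊆ {1,…,n}` the polynomial coefficient of `dx_I = dx_{i₁} ∧ … ∧ dx_{i_r}` (indices in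
increasing order).  The `r`-forms are the elements supported on subsets of cardinality `r`.
-/

open MvPolynomial

noncomputable section

/-- The polynomial ring `S = ℂ[x₁,…,xₙ]`. -/
abbrev S (n : ℕ) : Type := MvPolynomial (Fin n) ℂ

/-- The exterior algebra of differential forms over `S`: a form is given by its coefficient
at each basis monomial `dx_I`, `I ⊆ {1,…,n}`. -/
abbrev Ω (n : ℕ) : Type := Finset (Fin n) → S n

variable {n : ℕ}

/-- The sign `(-1)^{#{(i,j) ∈ I × J : j < i}}` arising when reordering `dx_I ∧ dx_J`. -/
def sgnMerge (I J : Finset (Fin n)) : ℤ :=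
  (-1) ^ (∑ i ∈ I, (J.filter (fun j => j < i)).card)

/-- Exterior (wedge) product of forms. -/
def wedge (μ τ : Ω n) : Ω n :=
  fun K => ∑ I ∈ K.powerset, (sgnMerge I (K \ I) : S n) * μ I * τ (K \ I)

/-- Contraction `i_X` with a vector field `X = Σ_k X_k ∂/∂x_k` (given by its components). -/
def contr (X : Fin n → S n) (τ : Ω n) : Ω n :=
  fun J => ∑ k ∈ Jᶜ, ((-1 : S n) ^ (J.filter (fun j => j < k)).card) * X k * τ (insert k J)

/-- The exterior differential `d`. -/
def extd (τ : Ω n) : Ω n :=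
  fun I => ∑ k ∈ I, ((-1 : S n) ^ (I.filter (fun j => j < k)).card) * pderiv k (τ (I.erase k))

/-- The radial vector field `R = Σ_k x_k ∂/∂x_k`. -/
def radial (n : ℕ) : Fin n → S n := fun k => X k

/-- The unit `1 ∈ Ω⁰`. -/
def oneForm (n : ℕ) : Ω n := fun I => if I = ∅ then 1 else 0

/-- A polynomial regarded as a `0`-form. -/
def ofPoly (f : S n) : Ω n := fun I => if I = ∅ then f else 0

/-- The basic `1`-form `dx_k`. -/
def dx (k : Fin n) : Ω n := fun I => if I = {k} then 1 else 0

/-- `τ` is an `r`-form, i.e. `τ ∈ Ω^r`. -/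
def IsForm (τ : Ω n) (r : ℕ) : Prop := ∀ I : Finset (Fin n), I.card ≠ r → τ I = 0

/-- `τ ∈ Ω^z` for an integer `z` (so `τ = 0` when `z < 0`). -/
def IsFormZ (τ : Ω n) (z : ℤ) : Prop := ∀ I : Finset (Fin n), (I.card : ℤ) ≠ z → τ I = 0

/-- `τ ∈ Ω^r(b)`: an `r`-form, homogeneous of total degree `b`, where each `x_i` and each
`dx_i` has degree `1` (this is the grading by the Lie derivative along the radial field). -/
def IsHomogForm (τ : Ω n) (r b : ℕ) : Prop :=
  IsForm τ r ∧ ∀ (I : Finset (Fin n)) (m : Fin n →₀ ℕ),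
    coeff m (τ I) ≠ 0 → (∑ i ∈ m.support, m i) + I.card = b

/-- The coordinate vector field `∂/∂x_k`. -/
def coordVF (n : ℕ) (k : Fin n) : Fin n → S n := fun j => if j = k then 1 else 0

/-- Contraction `i_L` with a vector valued differential form `L ∈ Ω^{q+1} ⊗_S T`,
encoded by its components `L k ∈ Ω^{q+1}` with respect to the basis `∂/∂x_k` of `T`,
so `L = Σ_k (L k) ⊗ ∂/∂x_k` and `i_L τ = Σ_k (L k) ∧ i_{∂/∂x_k} τ`. -/
def vcontr (L : Fin n → Ω n) (τ : Ω n) : Ω n :=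
  ∑ k : Fin n, wedge (L k) (contr (coordVF n k) τ)

/-- The Lie derivative `L_K = [i_K, d] = i_K ∘ d + (-1)^q d ∘ i_K` with respect to a vector
valued form `K ∈ Ω^q ⊗_S T` (here `i_K` has degree `q - 1` and `d` has degree `1`). -/
def lieD (q : ℤ) (K : Fin n → Ω n) (τ : Ω n) : Ω n :=
  vcontr K (extd τ) + ((-1 : ℂ) ^ q) • extd (vcontr K τ)

/-- The identity vector valued `1`-form `Id = Σ_k dx_k ⊗ ∂/∂x_k ∈ Ω¹ ⊗_S T`. -/
def idVF (n : ℕ) : Fin n → Ω n := fun k => dx k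

/-- `D : Ω → Ω` is a (ℂ-linear) derivation of degree `q`. -/
structure IsDerivationOfDegree (D : Ω n → Ω n) (q : ℤ) : Prop where
  map_add : ∀ μ τ : Ω n, D (μ + τ) = D μ + D τ
  map_smul : ∀ (a : ℂ) (τ : Ω n), D (a • τ) = a • D τ
  map_degree : ∀ (r : ℕ) (τ : Ω n), IsForm τ r → IsFormZ (D τ) ((r : ℤ) + q)
  leibniz : ∀ (r : ℕ) (μ τ : Ω n), IsForm μ r →
    D (wedge μ τ) = wedge (D μ) τ + ((-1 : ℂ) ^ ((r : ℤ) * q)) • wedge μ (D τ)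

/-- `D : Ω → Ω` is a differential operator of order `1` and degree `q`, i.e. a ℂ-linear
map of degree `q` with `[[D, λ_μ], λ_τ] = 0` for all `μ, τ ∈ Ω` (stated on homogeneous
`μ ∈ Ω^r`, `τ ∈ Ω^s`, with the graded commutator signs). -/
structure IsDiffOpOfDegree (D : Ω n → Ω n) (q : ℤ) : Prop where
  map_add : ∀ μ τ : Ω n, D (μ + τ) = D μ + D τ
  map_smul : ∀ (a : ℂ) (τ : Ω n), D (a • τ) = a • D τ
  map_degree : ∀ (r : ℕ) (τ : Ω n), IsForm τ r → IsFormZ (D τ) ((r : ℤ) + q)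
  order_one : ∀ (r s : ℕ) (μ τ : Ω n), IsForm μ r → IsForm τ s → ∀ σ : Ω n,
    D (wedge μ (wedge τ σ)) - ((-1 : ℂ) ^ (q * (r : ℤ))) • wedge μ (D (wedge τ σ)) -
      ((-1 : ℂ) ^ ((q + (r : ℤ)) * (s : ℤ))) •
        (wedge τ (D (wedge μ σ)) - ((-1 : ℂ) ^ (q * (r : ℤ))) • wedge τ (wedge μ (D σ))) = 0

/-- The deformed action `f · τ = α(r,b,c)·fτ + β(r,b,c)·df ∧ i_R τ` of a homogeneous
polynomial `f ∈ S(c)` on `τ ∈ Ω^r(b)`, for given scalar families `α`, `β`. -/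
def defAct (α β : ℕ → ℕ → ℕ → ℂ) (r b c : ℕ) (f : S n) (τ : Ω n) : Ω n :=
  α r b c • (f • τ) + β r b c • wedge (extd (ofPoly f)) (contr (radial n) τ)

/-- The differential operator `ω̃₁ ∧ L_Id + ω̃₂ ∧ i_Id + λ_μ̃`, evaluated on `τ ∈ Ω^r`:
`τ ↦ ω̃₁ ∧ dτ + r · ω̃₂ ∧ τ + μ̃ ∧ τ`. -/
def opId (ω₁ ω₂ μ : Ω n) (r : ℕ) (τ : Ω n) : Ω n :=
  wedge ω₁ (extd τ) + (r : ℂ) • wedge ω₂ τ + wedge μ τ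

/-- The quantity `b - a·(r/q + (-1)^q t)`. -/
def denomA (q a : ℕ) (t : ℂ) (r b : ℕ) : ℂ :=
  (b : ℂ) - (a : ℂ) * ((r : ℂ) / (q : ℂ) + (-1 : ℂ) ^ q * t)

/-- `α(r,b,c) = (b - a(r/q + (-1)^q t)) / (b + c - a(r/q + (-1)^q t))`. -/
def alphaA (q a : ℕ) (t : ℂ) (r b c : ℕ) : ℂ :=
  denomA q a t r b / (denomA q a t r b + (c : ℂ))

/-- `β(r,b,c) = α(r,b,c) / (b - a(r/q + (-1)^q t))`. -/
def betaA (q a : ℕ) (t : ℂ) (r b c : ℕ) : ℂ :=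
  alphaA q a t r b c / denomA q a t r b

/-- A linearizable differential operator
`D = ω₁ ∧ L_Id + ((1/q)dω₁ + ω₂) ∧ i_Id + (t·λ_{dω₁} + λ_μ)`, evaluated on `τ ∈ Ω^r`. -/
def linOp (q : ℕ) (t : ℂ) (ω₁ ω₂ μ : Ω n) (r : ℕ) (τ : Ω n) : Ω n :=
  wedge ω₁ (extd τ) + (r : ℂ) • wedge ((q : ℂ)⁻¹ • extd ω₁ + ω₂) τ +
    wedge (t • extd ω₁ + μ) τ

/-- The deformed action linearizing the exterior differential:
`f ·_d τ = (b/(b+c))·(fτ + (1/b)·df ∧ i_R τ)`, with `f ·_d τ = fτ` when `b = 0`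
(in particular when `b = c = 0`). -/
def dotdT (b c : ℕ) (f : S n) (τ : Ω n) : Ω n :=
  if b = 0 then f • τ
  else ((b : ℂ) / ((b : ℂ) + (c : ℂ))) •
    (f • τ + ((b : ℂ))⁻¹ • wedge (extd (ofPoly f)) (contr (radial n) τ))

/-- The deformed action linearizing the exterior differential:
`f ·_d τ = (b/(b+c))·(fτ + (1/b)·df ∧ i_R τ)`, with the usual product when `b = c = 0`. -/
def dotd (b c : ℕ) (f : S n) (τ : Ω n) : Ω n :=
  if b = 0 ∧ c = 0 then f • τ
  else ((b : ℂ) / ((b : ℂ) + (c : ℂ))) •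
    (f • τ + ((b : ℂ))⁻¹ • wedge (extd (ofPoly f)) (contr (radial n) τ))

/-- `κ(r) = (r+1)/2`. -/
def kapC (r : ℕ) : ℂ := ((r : ℂ) + 1) / 2

/-- The differential operator `ω△ : Ω^r → Ω^{r+2}`, `ω△τ = ω ∧ dτ + κ(r)·dω ∧ τ`. -/
def triOp (ω : Ω n) (r : ℕ) (τ : Ω n) : Ω n :=
  wedge ω (extd τ) + kapC r • wedge (extd ω) τ

/-- The deformed action linearizing `ω△`:
`f ·_{ω△} τ = (1/(b+c-κ(r)a))·[(b-κ(r)a)·fτ + df ∧ i_R τ]`. -/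
def triAct (a r b c : ℕ) (f : S n) (τ : Ω n) : Ω n :=
  ((b : ℂ) + (c : ℂ) - kapC r * (a : ℂ))⁻¹ •
    (((b : ℂ) - kapC r * (a : ℂ)) • (f • τ) + wedge (extd (ofPoly f)) (contr (radial n) τ))

/-- The Lie derivative `L_X ω = i_X (dω) + d (i_X ω)` along a vector field `X`. -/
def lieVF (X : Fin n → S n) (ω : Ω n) : Ω n := contr X (extd ω) + extd (contr X ω)

end

noncomputable section Aux

open Finset

variable {n : ℕ}

lemma psmul_apply (f : S n) (τ : Ω n) (I : Finset (Fin n)) : (f • τ) I = f * τ I := rfl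

lemma csmul_eq_psmul (z : ℂ) (τ : Ω n) : z • τ = (C z : S n) • τ := by
  funext I
  show z • τ I = C z * τ I
  rw [MvPolynomial.smul_eq_C_mul]

lemma wedge_psmul_left (f : S n) (μ τ : Ω n) : wedge (f • μ) τ = f • wedge μ τ := by
  funext K
  show _ = f * _
  rw [wedge, wedge, Finset.mul_sum]
  refine Finset.sum_congr rfl fun I _ => ?_
  rw [psmul_apply]; ring

lemma wedge_psmul_right (f : S n) (μ τ : Ω n) : wedge μ (f • τ) = f • wedge μ τ := by
  funext K
  show _ = f * _
  rw [wedge, wedge, Finset.mul_sum]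
  refine Finset.sum_congr rfl fun I _ => ?_
  rw [psmul_apply]; ring

lemma wedge_add_left (μ₁ μ₂ τ : Ω n) : wedge (μ₁ + μ₂) τ = wedge μ₁ τ + wedge μ₂ τ := by
  funext K
  show _ = wedge μ₁ τ K + wedge μ₂ τ K
  rw [wedge, wedge, wedge, ← Finset.sum_add_distrib]
  refine Finset.sum_congr rfl fun I _ => ?_
  show _ * (μ₁ I + μ₂ I) * _ = _
  ring

lemma wedge_add_right (μ τ₁ τ₂ : Ω n) : wedge μ (τ₁ + τ₂) = wedge μ τ₁ + wedge μ τ₂ := by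
  funext K
  show _ = wedge μ τ₁ K + wedge μ τ₂ K
  rw [wedge, wedge, wedge, ← Finset.sum_add_distrib]
  refine Finset.sum_congr rfl fun I _ => ?_
  show _ * _ * (τ₁ _ + τ₂ _) = _
  ring

lemma wedge_zero_right (μ : Ω n) : wedge μ 0 = 0 := by
  funext K
  show ∑ I ∈ K.powerset, _ * μ I * (0 : S n) = 0
  simp

lemma wedge_csmul_right (z : ℂ) (μ τ : Ω n) : wedge μ (z • τ) = z • wedge μ τ := by
  rw [csmul_eq_psmul, csmul_eq_psmul, wedge_psmul_right]

lemma contr_psmul (X : Fin n → S n) (f : S n) (τ : Ω n) :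
    contr X (f • τ) = f • contr X τ := by
  funext J
  show _ = f * _
  rw [contr, contr, Finset.mul_sum]
  refine Finset.sum_congr rfl fun k _ => ?_
  rw [psmul_apply]; ring

lemma contr_add (X : Fin n → S n) (τ₁ τ₂ : Ω n) :
    contr X (τ₁ + τ₂) = contr X τ₁ + contr X τ₂ := by
  funext J
  show _ = contr X τ₁ J + contr X τ₂ J
  rw [contr, contr, contr, ← Finset.sum_add_distrib]
  refine Finset.sum_congr rfl fun k _ => ?_
  show _ * _ * (τ₁ _ + τ₂ _) = _
  ring

lemma contr_csmul (X : Fin n → S n) (z : ℂ) (τ : Ω n) :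
    contr X (z • τ) = z • contr X τ := by
  rw [csmul_eq_psmul, csmul_eq_psmul, contr_psmul]

lemma contr_zero (X : Fin n → S n) : contr X (0 : Ω n) = 0 := by
  funext J
  show ∑ k ∈ Jᶜ, _ * X k * (0 : S n) = 0
  simp

end Aux
noncomputable section Aux2

open Finset

variable {n : ℕ}

lemma extd_ofPoly_apply (f : S n) (I : Finset (Fin n)) :
    extd (ofPoly f) I = ∑ k ∈ I, if I = {k} then pderiv k f else 0 := by
  rw [extd]
  refine Finset.sum_congr rfl fun k hk => ?_
  by_cases h : I = {k}
  · subst h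
    simp [ofPoly, Finset.filter_singleton]
  · have h2 : I.erase k ≠ ∅ := by
      intro hE
      rcases (Finset.erase_eq_empty_iff I k).mp hE with rfl | h3
      · exact absurd hk (Finset.notMem_empty k)
      · exact h h3
    rw [ofPoly, if_neg h]
    simp [h2]

lemma wedge_extd_apply (f : S n) (ρ : Ω n) (K : Finset (Fin n)) :
    wedge (extd (ofPoly f)) ρ K =
      ∑ k ∈ K, ((-1 : S n) ^ ((K.filter (· < k)).card)) * pderiv k f * ρ (K.erase k) := by
  rw [wedge]
  have h1 : ∀ I ∈ K.powerset, ((sgnMerge I (K \ I) : S n) * extd (ofPoly f) I * ρ (K \ I) ≠ 0) →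
      I.card = 1 := by
    intro I _ hne
    by_contra hcard
    apply hne
    have : extd (ofPoly f) I = 0 := by
      rw [extd_ofPoly_apply]
      refine Finset.sum_eq_zero fun k hk => ?_
      rw [if_neg]
      intro h; subst h; simp at hcard
    rw [this, mul_zero, zero_mul]
  rw [(Finset.sum_filter_of_ne h1).symm, ← Finset.powersetCard_eq_filter,
    Finset.powersetCard_one, Finset.sum_map]
  refine Finset.sum_congr rfl fun k hk => ?_
  have hdiff : K \ {k} = K.erase k := Finset.sdiff_singleton_eq_erase k K
  show (sgnMerge {k} (K \ {k}) : S n) * extd (ofPoly f) {k} * ρ (K \ {k}) = _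
  rw [hdiff, extd_ofPoly_apply]
  have hed : (∑ j ∈ ({k} : Finset (Fin n)), if ({k} : Finset (Fin n)) = {j} then pderiv j f else 0)
      = pderiv k f := by simp
  rw [hed]
  congr 1
  congr 1
  rw [sgnMerge, Finset.sum_singleton]
  have : ((K.erase k).filter (fun j => j < k)) = K.filter (fun j => j < k) := by
    rw [Finset.filter_erase]
    apply Finset.erase_eq_of_notMem
    simp
  rw [this]
  push_cast
  rfl

lemma extd_ofPoly_mul (f g : S n) :
    extd (ofPoly (g * f)) = g • extd (ofPoly f) + f • extd (ofPoly g) := by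
  funext I
  show _ = g * extd (ofPoly f) I + f * extd (ofPoly g) I
  rw [extd_ofPoly_apply, extd_ofPoly_apply, extd_ofPoly_apply,
    Finset.mul_sum, Finset.mul_sum, ← Finset.sum_add_distrib]
  refine Finset.sum_congr rfl fun k _ => ?_
  by_cases h : I = {k}
  · simp only [h, if_pos rfl, pderiv_mul, if_true]
    ring
  · simp [h]

end Aux2
noncomputable section Aux3

open Finset

variable {n : ℕ}

lemma sgn_mul_insert (J : Finset (Fin n)) {k l : Fin n} (hk : k ∉ J) :
    ((-1 : S n) ^ ((J.filter (· < k)).card)) * (-1) ^ (((insert k J).filter (· < l)).card)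
      = (if k < l then -1 else 1) *
        ((-1) ^ ((J.filter (· < k)).card) * (-1) ^ ((J.filter (· < l)).card)) := by
  rw [Finset.filter_insert]
  by_cases h : k < l
  · rw [if_pos h, if_pos h,
      Finset.card_insert_of_notMem (fun hmem => hk (Finset.mem_of_mem_filter _ hmem)), pow_succ]
    ring
  · rw [if_neg h, if_neg h]
    ring

lemma sgn_mul_erase (J : Finset (Fin n)) {k l : Fin n} (hl : l ∈ J) :
    ((-1 : S n) ^ ((J.filter (· < l)).card)) * (-1) ^ (((J.erase l).filter (· < k)).card)
      = (if l < k then -1 else 1) *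
        ((-1) ^ ((J.filter (· < l)).card) * (-1) ^ ((J.filter (· < k)).card)) := by
  rw [Finset.filter_erase]
  by_cases h : l < k
  · have hmem : l ∈ J.filter (· < k) := Finset.mem_filter.mpr ⟨hl, h⟩
    rw [if_pos h, ← Finset.card_erase_add_one hmem, pow_succ]
    ring
  · rw [if_neg h, Finset.erase_eq_of_notMem
      (fun hmem : l ∈ J.filter (· < k) => h (Finset.mem_filter.mp hmem).2)]
    ring

lemma neg_one_sq_pow (m : ℕ) : ((-1 : S n)) ^ m * (-1) ^ m = 1 := by
  rw [← pow_add]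
  exact Even.neg_one_pow ⟨m, rfl⟩

lemma euler_monomial (m : Fin n →₀ ℕ) (a : ℂ) :
    ∑ k : Fin n, (X k : S n) * pderiv k (monomial m a)
      = ((∑ k : Fin n, m k : ℕ) : ℂ) • monomial m a := by
  push_cast
  rw [Finset.sum_smul]
  refine Finset.sum_congr rfl fun k _ => ?_
  rw [pderiv_monomial]
  by_cases h : m k = 0
  · simp [h]
  · have h1 : Finsupp.single k 1 ≤ m := by
      rw [Finsupp.single_le_iff]
      omega
    rw [X, monomial_mul, one_mul, add_tsub_cancel_of_le h1, smul_monomial, smul_eq_mul,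
      mul_comm]

lemma euler {c : ℕ} {f : S n} (hf : f.IsHomogeneous c) :
    ∑ k : Fin n, (X k : S n) * pderiv k f = (c : ℂ) • f := by
  conv_lhs => rw [f.as_sum]
  conv_rhs => rw [f.as_sum]
  simp only [map_sum, Finset.mul_sum, Finset.smul_sum]
  rw [Finset.sum_comm]
  refine Finset.sum_congr rfl fun m hm => ?_
  rw [euler_monomial]
  congr 2
  have hc := hf (MvPolynomial.mem_support_iff.mp hm)
  rw [Finsupp.weight_apply] at hc
  rw [← hc, Finsupp.sum]
  rw [Finset.sum_subset (Finset.subset_univ m.support)]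
  · simp
  · intro x _ hx
    simpa using Finsupp.notMem_support_iff.mp hx

end Aux3
noncomputable section Aux4

open Finset

variable {n : ℕ}

lemma contr_contr (Xv : Fin n → S n) (τ : Ω n) : contr Xv (contr Xv τ) = 0 := by
  funext J
  show (∑ k ∈ Jᶜ, ((-1 : S n) ^ ((J.filter (· < k)).card)) * Xv k * contr Xv τ (insert k J))
      = (0 : S n)
  set G : Fin n → Fin n → S n := fun k l => if l = k then 0 else
    ((-1 : S n) ^ ((J.filter (· < k)).card)) * Xv k *
      (((-1 : S n) ^ (((insert k J).filter (· < l)).card)) * Xv l *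
        τ (insert l (insert k J))) with hG
  have hexp : ∀ k ∈ Jᶜ, ((-1 : S n) ^ ((J.filter (· < k)).card)) * Xv k
      * contr Xv τ (insert k J) = ∑ l ∈ Jᶜ, G k l := by
    intro k hk
    rw [contr, Finset.compl_insert, Finset.mul_sum]
    rw [← Finset.sum_erase (f := G k) (a := k) Jᶜ (by simp [hG])]
    refine Finset.sum_congr rfl fun l hl => ?_
    have hlk : l ≠ k := (Finset.mem_erase.mp hl).1
    rw [hG]
    simp only [if_neg hlk]
  rw [Finset.sum_congr rfl hexp]
  have hanti : ∀ k ∈ Jᶜ, ∀ l ∈ Jᶜ, G k l = - G l k := by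
    intro k hk l hl
    have hkJ : k ∉ J := by simpa using hk
    have hlJ : l ∉ J := by simpa using hl
    by_cases hkl : l = k
    · subst hkl
      simp [hG]
    · have hkl' : k ≠ l := fun h => hkl h.symm
      rw [hG]
      simp only [if_neg hkl, if_neg hkl']
      rw [Finset.insert_comm]
      have h1 := sgn_mul_insert (J := J) (l := l) hkJ
      have h2 := sgn_mul_insert (J := J) (l := k) hlJ
      rcases hkl'.lt_or_gt with h | h
      · rw [if_pos h] at h1
        rw [if_neg (asymm h)] at h2
        linear_combination (Xv k * Xv l * τ (insert k (insert l J))) * h1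
          + (Xv k * Xv l * τ (insert k (insert l J))) * h2
      · rw [if_neg (asymm h)] at h1
        rw [if_pos h] at h2
        linear_combination (Xv k * Xv l * τ (insert k (insert l J))) * h1
          + (Xv k * Xv l * τ (insert k (insert l J))) * h2
  have hTT : (∑ k ∈ Jᶜ, ∑ l ∈ Jᶜ, G k l) = -(∑ k ∈ Jᶜ, ∑ l ∈ Jᶜ, G k l) := by
    nth_rewrite 1 [Finset.sum_comm]
    rw [← Finset.sum_neg_distrib]
    refine Finset.sum_congr rfl fun l hl => ?_
    rw [← Finset.sum_neg_distrib]
    refine Finset.sum_congr rfl fun k hk => ?_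
    exact hanti k hk l hl
  have h2 : (∑ k ∈ Jᶜ, ∑ l ∈ Jᶜ, G k l) + (∑ k ∈ Jᶜ, ∑ l ∈ Jᶜ, G k l) = 0 := by
    nth_rewrite 2 [hTT]
    exact add_neg_cancel _
  exact add_self_eq_zero.mp h2

lemma contr_wedge_extd (Xv : Fin n → S n) (f : S n) (ρ : Ω n) :
    contr Xv (wedge (extd (ofPoly f)) ρ) =
      (∑ k : Fin n, Xv k * pderiv k f) • ρ - wedge (extd (ofPoly f)) (contr Xv ρ) := by
  funext J
  show (∑ k ∈ Jᶜ, ((-1 : S n) ^ ((J.filter (· < k)).card)) * Xv k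
        * wedge (extd (ofPoly f)) ρ (insert k J))
      = (∑ k : Fin n, Xv k * pderiv k f) * ρ J - wedge (extd (ofPoly f)) (contr Xv ρ) J
  have hL : ∀ k ∈ Jᶜ, ((-1 : S n) ^ ((J.filter (· < k)).card)) * Xv k
      * wedge (extd (ofPoly f)) ρ (insert k J)
      = Xv k * pderiv k f * ρ J + ∑ l ∈ J,
        ((-1 : S n) ^ ((J.filter (· < k)).card)) * Xv k *
          (((-1 : S n) ^ (((insert k J).filter (· < l)).card)) * pderiv l f *
            ρ (insert k (J.erase l))) := by
    intro k hk
    have hkJ : k ∉ J := by simpa using hk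
    rw [wedge_extd_apply, Finset.sum_insert hkJ, mul_add, Finset.mul_sum]
    refine congrArg₂ (· + ·) ?_ ?_
    · rw [Finset.erase_insert hkJ, Finset.filter_insert, if_neg (lt_irrefl k)]
      calc ((-1 : S n) ^ ((J.filter (· < k)).card)) * Xv k *
            (((-1 : S n) ^ ((J.filter (· < k)).card)) * pderiv k f * ρ J)
          = (((-1 : S n) ^ ((J.filter (· < k)).card)) * ((-1 : S n) ^ ((J.filter (· < k)).card)))
            * (Xv k * pderiv k f * ρ J) := by ring
        _ = Xv k * pderiv k f * ρ J := by rw [neg_one_sq_pow, one_mul]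
    · refine Finset.sum_congr rfl fun l hl => ?_
      have hkl : k ≠ l := fun h => hkJ (h ▸ hl)
      rw [Finset.erase_insert_of_ne hkl]
  have hR : ∀ l ∈ J, ((-1 : S n) ^ ((J.filter (· < l)).card)) * pderiv l f
      * contr Xv ρ (J.erase l)
      = Xv l * pderiv l f * ρ J + ∑ k ∈ Jᶜ,
        ((-1 : S n) ^ ((J.filter (· < l)).card)) * pderiv l f *
          (((-1 : S n) ^ (((J.erase l).filter (· < k)).card)) * Xv k *
            ρ (insert k (J.erase l))) := by
    intro l hl
    have hlc : l ∉ Jᶜ := by simpa using hl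
    rw [contr, Finset.compl_erase, Finset.sum_insert hlc, mul_add, Finset.mul_sum]
    congr 1
    rw [Finset.insert_erase hl, Finset.filter_erase,
      Finset.erase_eq_of_notMem (fun hmem : l ∈ J.filter (· < l) =>
        (lt_irrefl l) (Finset.mem_filter.mp hmem).2)]
    calc ((-1 : S n) ^ ((J.filter (· < l)).card)) * pderiv l f *
          (((-1 : S n) ^ ((J.filter (· < l)).card)) * Xv l * ρ J)
        = (((-1 : S n) ^ ((J.filter (· < l)).card)) * ((-1 : S n) ^ ((J.filter (· < l)).card)))
          * (Xv l * pderiv l f * ρ J) := by ring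
      _ = Xv l * pderiv l f * ρ J := by rw [neg_one_sq_pow, one_mul]
  have hcross : ∀ l ∈ J, ∀ k ∈ Jᶜ,
      ((-1 : S n) ^ ((J.filter (· < k)).card)) * Xv k *
          (((-1 : S n) ^ (((insert k J).filter (· < l)).card)) * pderiv l f *
            ρ (insert k (J.erase l)))
      = -(((-1 : S n) ^ ((J.filter (· < l)).card)) * pderiv l f *
          (((-1 : S n) ^ (((J.erase l).filter (· < k)).card)) * Xv k *
            ρ (insert k (J.erase l)))) := by
    intro l hl k hk
    have hkJ : k ∉ J := by simpa using hk
    have hkl : k ≠ l := fun h => hkJ (h ▸ hl)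
    have h1 := sgn_mul_insert (J := J) (l := l) hkJ
    have h2 := sgn_mul_erase (J := J) (k := k) hl
    rcases hkl.lt_or_gt with h | h
    · rw [if_pos h] at h1
      rw [if_neg (asymm h)] at h2
      linear_combination (Xv k * pderiv l f * ρ (insert k (J.erase l))) * h1
        + (Xv k * pderiv l f * ρ (insert k (J.erase l))) * h2
    · rw [if_neg (asymm h)] at h1
      rw [if_pos h] at h2
      linear_combination (Xv k * pderiv l f * ρ (insert k (J.erase l))) * h1
        + (Xv k * pderiv l f * ρ (insert k (J.erase l))) * h2
  rw [Finset.sum_congr rfl hL, Finset.sum_add_distrib]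
  rw [wedge_extd_apply, Finset.sum_congr rfl hR, Finset.sum_add_distrib]
  have hsplit : (∑ k : Fin n, Xv k * pderiv k f) * ρ J
      = ∑ k ∈ J, Xv k * pderiv k f * ρ J + ∑ k ∈ Jᶜ, Xv k * pderiv k f * ρ J := by
    rw [← Finset.sum_add_sum_compl J (fun k => Xv k * pderiv k f), add_mul,
      Finset.sum_mul, Finset.sum_mul]
  rw [hsplit]
  have hcc : (∑ k ∈ Jᶜ, ∑ l ∈ J,
      ((-1 : S n) ^ ((J.filter (· < k)).card)) * Xv k *
        (((-1 : S n) ^ (((insert k J).filter (· < l)).card)) * pderiv l f *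
          ρ (insert k (J.erase l))))
      = - ∑ l ∈ J, ∑ k ∈ Jᶜ,
        ((-1 : S n) ^ ((J.filter (· < l)).card)) * pderiv l f *
          (((-1 : S n) ^ (((J.erase l).filter (· < k)).card)) * Xv k *
            ρ (insert k (J.erase l))) := by
    rw [Finset.sum_comm, ← Finset.sum_neg_distrib]
    refine Finset.sum_congr rfl fun l hl => ?_
    rw [← Finset.sum_neg_distrib]
    exact Finset.sum_congr rfl fun k hk => hcross l hl k hk
  rw [hcc]
  ring

end Aux4
noncomputable section Aux5

open Finset

variable {n : ℕ}

lemma wedge_zero_left (τ : Ω n) : wedge (0 : Ω n) τ = 0 := by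
  funext K
  show ∑ I ∈ K.powerset, _ * (0 : S n) * _ = 0
  simp

lemma psmul_csmul (g : S n) (z : ℂ) (τ : Ω n) : g • (z • τ) = z • (g • τ) := by
  rw [csmul_eq_psmul, csmul_eq_psmul, smul_comm]

lemma dotd_zero_right (b c : ℕ) (g : S n) : dotd b c g (0 : Ω n) = 0 := by
  rw [dotd]
  split
  · exact smul_zero g
  · rw [smul_zero, contr_zero, wedge_zero_right, smul_zero, add_zero, smul_zero]

lemma extd_ofPoly_C (z : ℂ) : extd (ofPoly (C z : S n)) = 0 := by
  funext I
  rw [extd_ofPoly_apply]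
  refine Finset.sum_eq_zero fun k _ => ?_
  split <;> simp [pderiv_C]

end Aux5

set_option maxHeartbeats 2000000 in
theorem dotd_assoc_main (n : ℕ) :
    (∀ (r b c e : ℕ) (f g : S n) (τ : Ω n), f.IsHomogeneous c → g.IsHomogeneous e →
      IsHomogForm τ r b →
      dotd b (c + e) (g * f) τ = dotd (b + c) e g (dotd b c f τ)) ∧
    (∀ (z : ℂ) (r b : ℕ) (τ : Ω n), 1 ≤ b → IsHomogForm τ r b →
      dotd b 0 (C z : S n) τ = z • τ) := by
  constructor
  · intro r b c e f g τ hf hg hτ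
    by_cases hb : b = 0
    · subst hb
      by_cases hc : c = 0
      · subst hc
        by_cases he : e = 0
        · subst he
          rw [dotd, if_pos ⟨rfl, rfl⟩, dotd, if_pos ⟨rfl, rfl⟩, dotd, if_pos ⟨rfl, rfl⟩,
            mul_smul]
        · have hσ : dotd 0 0 f τ = f • τ := by rw [dotd, if_pos ⟨rfl, rfl⟩]
          rw [hσ, dotd, if_neg (by simp [he]), dotd, if_neg (fun h => he h.2)]
          norm_num
      · have hσ : dotd 0 c f τ = 0 := by
          rw [dotd, if_neg (fun h => hc h.2)]
          norm_num
        rw [hσ, dotd_zero_right, dotd, if_neg (by rintro ⟨_, h⟩; omega)]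
        norm_num
    · -- main case: b ≠ 0
      have hu : ((b : ℕ) : ℂ) ≠ 0 := Nat.cast_ne_zero.mpr hb
      have huv : ((b : ℂ) + (c : ℂ)) ≠ 0 := by
        have h : ((b : ℂ) + (c : ℂ)) = ((b + c : ℕ) : ℂ) := by push_cast; ring
        rw [h]
        exact Nat.cast_ne_zero.mpr (by omega)
      have hbc : ((b + c : ℕ) : ℂ) ≠ 0 := Nat.cast_ne_zero.mpr (by omega)
      have huvw : ((b : ℂ) + (c : ℂ) + (e : ℂ)) ≠ 0 := by
        have h : ((b : ℂ) + (c : ℂ) + (e : ℂ)) = ((b + c + e : ℕ) : ℂ) := by push_cast; ring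
        rw [h]
        exact Nat.cast_ne_zero.mpr (by omega)
      have huvw' : ((b : ℂ) + ((c : ℂ) + (e : ℂ))) ≠ 0 := by
        rwa [← add_assoc]
      have h2 : contr (radial n) (wedge (extd (ofPoly f)) (contr (radial n) τ))
          = (c : ℂ) • (f • contr (radial n) τ) := by
        rw [contr_wedge_extd, contr_contr, wedge_zero_right, sub_zero]
        rw [show (∑ k : Fin n, radial n k * pderiv k f) = ∑ k : Fin n, X k * pderiv k f from rfl,
          euler hf, smul_assoc]
      rw [dotd, if_neg (by simp [hb]), dotd, if_neg (by rintro ⟨h1, _⟩; exact hb (by omega)),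
        dotd, if_neg (by simp [hb])]
      rw [extd_ofPoly_mul, wedge_add_left, wedge_psmul_left, wedge_psmul_left]
      rw [contr_csmul, contr_add, contr_psmul, contr_csmul, h2]
      rw [mul_smul]
      simp only [wedge_csmul_right, wedge_add_right, wedge_psmul_right, smul_add, psmul_csmul]
      match_scalars
      · simp only [← Algebra.smul_def]
        match_scalars
        field_simp [hu, huv, huvw, huvw']
        try ring
      · simp only [← Algebra.smul_def]
        match_scalars
        field_simp [hu, huv, huvw, huvw']
        try ring
      · rw [show ((c : ℕ) : S n) = algebraMap ℂ (S n) ((c : ℕ) : ℂ) from (map_natCast _ c).symm]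
        simp only [← Algebra.smul_def]
        match_scalars
        field_simp [hu, huv, huvw, huvw']
        ring
  · intro z r b τ hb hτ
    have hb0 : b ≠ 0 := by omega
    have hu : ((b : ℕ) : ℂ) ≠ 0 := Nat.cast_ne_zero.mpr hb0
    rw [dotd, if_neg (fun h => hb0 h.1), extd_ofPoly_C, wedge_zero_left, smul_zero, add_zero]
    rw [← csmul_eq_psmul, Nat.cast_zero, add_zero, div_self hu, one_smul]

/-- The operation `f ·_d τ = (b/(b+c))·(fτ + (1/b)·df∧i_Rτ)` for
homogeneous `f ∈ S(c)`, `τ ∈ Ω^r(b)` (with the usual product when `b = c = 0`) is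
associative over `S`: `(gf) ·_d τ = g ·_d (f ·_d τ)`; and it extends scalar
multiplication by `ℂ`, giving an `S`-module structure on `⊕_{b ≥ 1} Ω^r(b)`. -/
theorem dotd_associative (n : ℕ) :
    (∀ (r b c e : ℕ) (f g : S n) (τ : Ω n), f.IsHomogeneous c → g.IsHomogeneous e →
      IsHomogForm τ r b →
      dotd b (c + e) (g * f) τ = dotd (b + c) e g (dotd b c f τ)) ∧
    (∀ (z : ℂ) (r b : ℕ) (τ : Ω n), 1 ≤ b → IsHomogForm τ r b →
      dotd b 0 (C z : S n) τ = z • τ) :=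
  dotd_assoc_main n
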